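/- Under the assumptions of the previous statement, for every feasible x: (1/(4u))·ξ(x)ᵀξ(x) ≤ F(x) - F(x*) ≤ (1/(4v))·ξ(x)ᵀξ(x), where ξ(x) = ∇F(x) - ((𝟙ᵀ∇F(x))/n)·𝟙. -/

import Mathlib

lemma taylor_lower {E : Type*} [NormedAddCommGroup E] [NormedSpace ℝ E]
    (F : E → ℝ) (hF : ContDiff ℝ 2 F)
    (c : ℝ) (h : ∀ x y, c * ‖y‖ ^ 2 ≤ iteratedFDeriv ℝ 2 F x ![y, y])
    (a d : E) :
    F a + fderiv ℝ F a d + c / 2 * ‖d‖ ^ 2 ≤ F (a + d) := by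
  set L : ℝ → E := fun t => a + t • d with hLdef
  have hL : ∀ t : ℝ, HasDerivAt L d t := fun t => by
    simpa [hLdef] using ((hasDerivAt_id t).smul_const d).const_add a
  have hFd : Differentiable ℝ F := hF.differentiable two_ne_zero
  have hF' : ContDiff ℝ 1 (fderiv ℝ F) := hF.fderiv_right (by norm_num)
  set φ : ℝ → ℝ := fun t => F (L t) with hφdef
  set φ' : ℝ → ℝ := fun t => fderiv ℝ F (L t) d with hφ'def
  set φ'' : ℝ → ℝ := fun t => fderiv ℝ (fderiv ℝ F) (L t) d d with hφ''def
  have hφ : ∀ t, HasDerivAt φ (φ' t) t := fun t =>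
    (hFd (L t)).hasFDerivAt.comp_hasDerivAt t (hL t)
  have hφ' : ∀ t, HasDerivAt φ' (φ'' t) t := fun t => by
    have h1 : HasFDerivAt (fun y => fderiv ℝ F y d)
        ((ContinuousLinearMap.apply ℝ ℝ d).comp (fderiv ℝ (fderiv ℝ F) (L t))) (L t) :=
      (ContinuousLinearMap.apply ℝ ℝ d).hasFDerivAt.comp _
        ((hF'.differentiable one_ne_zero) (L t)).hasFDerivAt
    exact h1.comp_hasDerivAt t (hL t)
  have hlow : ∀ t, c * ‖d‖ ^ 2 ≤ φ'' t := fun t => by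
    have h2 := h (L t) d
    rw [iteratedFDeriv_two_apply] at h2
    simpa using h2
  set ψ : ℝ → ℝ := fun t => φ t - t * φ' 0 - c / 2 * (t ^ 2 * ‖d‖ ^ 2) with hψdef
  set ψ' : ℝ → ℝ := fun t => φ' t - φ' 0 - c * (t * ‖d‖ ^ 2) with hψ'def
  have hψ' : ∀ t, HasDerivAt ψ' (φ'' t - c * ‖d‖ ^ 2) t := fun t => by
    have h2 : HasDerivAt (fun t : ℝ => c * (t * ‖d‖ ^ 2)) (c * ‖d‖ ^ 2) t := by
      simpa using ((hasDerivAt_id t).mul_const (‖d‖ ^ 2)).const_mul c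
    exact ((hφ' t).sub_const (φ' 0)).sub h2
  have hψ'mono : Monotone ψ' :=
    monotone_of_deriv_nonneg (fun t => (hψ' t).differentiableAt)
      (fun t => by rw [(hψ' t).deriv]; linarith [hlow t])
  have hψ'0 : ψ' 0 = 0 := by simp [hψ'def]
  have hψ : ∀ t, HasDerivAt ψ (ψ' t) t := fun t => by
    have h1 : HasDerivAt (fun t : ℝ => t * φ' 0) (φ' 0) t := by
      simpa using (hasDerivAt_id t).mul_const (φ' 0)
    have h2 : HasDerivAt (fun t : ℝ => c / 2 * (t ^ 2 * ‖d‖ ^ 2))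
        (c / 2 * (2 * t * ‖d‖ ^ 2)) t := by
      have := ((hasDerivAt_pow 2 t).mul_const (‖d‖ ^ 2)).const_mul (c / 2)
      simpa [mul_assoc] using this
    have := ((hφ t).sub h1).sub h2
    refine this.congr_deriv ?_
    show _ = φ' t - φ' 0 - c * (t * ‖d‖ ^ 2); ring
  have hmono : MonotoneOn ψ (Set.Ici 0) := by
    apply monotoneOn_of_deriv_nonneg (convex_Ici 0)
      (fun t _ => (hψ t).continuousAt.continuousWithinAt)
      (fun t _ => (hψ t).differentiableAt.differentiableWithinAt)
    intro t ht
    rw [interior_Ici] at ht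
    rw [(hψ t).deriv]
    have := hψ'mono (le_of_lt ht)
    rw [hψ'0] at this
    exact this
  have h01 := hmono (Set.mem_Ici.mpr le_rfl) (Set.mem_Ici.mpr zero_le_one) zero_le_one
  have e0 : ψ 0 = F a := by simp [hψdef, hφdef, hLdef]
  have e1 : ψ 1 = F (a + d) - fderiv ℝ F a d - c / 2 * ‖d‖ ^ 2 := by
    simp [hψdef, hφdef, hφ'def, hLdef]
  rw [e0, e1] at h01
  linarith

lemma taylor_upper {E : Type*} [NormedAddCommGroup E] [NormedSpace ℝ E]
    (F : E → ℝ) (hF : ContDiff ℝ 2 F)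
    (c : ℝ) (h : ∀ x y, iteratedFDeriv ℝ 2 F x ![y, y] ≤ c * ‖y‖ ^ 2)
    (a d : E) :
    F (a + d) ≤ F a + fderiv ℝ F a d + c / 2 * ‖d‖ ^ 2 := by
  have h2 : ∀ x y, (-c) * ‖y‖ ^ 2 ≤ iteratedFDeriv ℝ 2 (-F) x ![y, y] := by
    intro x y
    rw [iteratedFDeriv_neg_apply]
    simp only [ContinuousMultilinearMap.neg_apply]
    linarith [h x y]
  have := taylor_lower (-F) hF.neg (-c) h2 a d
  have hfd : fderiv ℝ (-F) a d = -(fderiv ℝ F a d) := by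
    have : (-F) = fun y => -(F y) := rfl
    rw [fderiv_neg]; simp
  simp only [Pi.neg_apply, hfd] at this
  linarith

theorem stmt8 (n : ℕ) (v u b : ℝ) (hv : 0 < v) (hvu : v ≤ u)
    (F : EuclideanSpace ℝ (Fin n) → ℝ) (hF : ContDiff ℝ 2 F)
    (hHess : ∀ x y : EuclideanSpace ℝ (Fin n),
      2 * v * ‖y‖ ^ 2 ≤ iteratedFDeriv ℝ 2 F x ![y, y] ∧
      iteratedFDeriv ℝ 2 F x ![y, y] ≤ 2 * u * ‖y‖ ^ 2)
    (xstar : EuclideanSpace ℝ (Fin n)) (hfeas : ∑ i, xstar i = b)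
    (hmin : ∀ x : EuclideanSpace ℝ (Fin n), (∑ i, x i = b) → F xstar ≤ F x)
    (hspan : ∃ c : ℝ, ∀ i, gradient F xstar i = c)
    (x : EuclideanSpace ℝ (Fin n)) (hx : ∑ i, x i = b)
    (ξ : EuclideanSpace ℝ (Fin n))
    (hξ : ∀ i, ξ i = gradient F x i - (∑ j, gradient F x j) / n) :
    (1 / (4 * u)) * @inner ℝ _ _ ξ ξ ≤ F x - F xstar ∧
    F x - F xstar ≤ (1 / (4 * v)) * @inner ℝ _ _ ξ ξ := by
  have hu : 0 < u := lt_of_lt_of_le hv hvu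
  have hFd : Differentiable ℝ F := hF.differentiable two_ne_zero
  set g := gradient F x with hg
  have hfder : ∀ d : EuclideanSpace ℝ (Fin n), fderiv ℝ F x d = @inner ℝ _ _ g d := by
    intro d
    have h1 := (hFd x).hasGradientAt.hasFDerivAt.fderiv
    rw [h1]
    exact InnerProductSpace.toDual_apply_apply
  -- coordinate formula for inner
  have hinner : ∀ a c : EuclideanSpace ℝ (Fin n),
      @inner ℝ _ _ a c = ∑ i, a i * c i := by
    intro a c
    simp [PiLp.inner_apply, RCLike.inner_apply, mul_comm]
  rcases Nat.eq_zero_or_pos n with hn | hn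
  · subst hn
    have hxx : x = xstar := Subsingleton.elim _ _
    have hz : @inner ℝ _ _ ξ ξ = 0 := by
      rw [hinner]; simp
    rw [hxx, hz]
    norm_num
  have hnR : (n : ℝ) ≠ 0 := Nat.cast_ne_zero.mpr hn.ne'
  set s := ∑ j, g j with hs
  have hsum_ξ : ∑ i, ξ i = 0 := by
    simp only [hξ]
    rw [Finset.sum_sub_distrib, Finset.sum_const, Finset.card_univ, Fintype.card_fin,
      nsmul_eq_mul]
    field_simp
    exact sub_eq_zero.mpr hs.symm
  have hgx : @inner ℝ _ _ g ξ = @inner ℝ _ _ ξ ξ := by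
    rw [hinner, hinner]
    have h1 : ∑ i, g i * ξ i - ∑ i, ξ i * ξ i = ∑ i, (s / n) * ξ i := by
      rw [← Finset.sum_sub_distrib]
      apply Finset.sum_congr rfl
      intro i _
      rw [hξ i]
      ring
    rw [← Finset.mul_sum, hsum_ξ, mul_zero] at h1
    linarith
  have hI : @inner ℝ _ _ ξ ξ = ‖ξ‖ ^ 2 := real_inner_self_eq_norm_sq ξ
  constructor
  · -- lower bound: gradient step
    set t : ℝ := 1 / (2 * u) with ht
    have hfeas2 : ∑ i, (x + (-t) • ξ) i = b := by
      simp only [PiLp.add_apply, PiLp.smul_apply, smul_eq_mul]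
      rw [Finset.sum_add_distrib, ← Finset.mul_sum, hsum_ξ, hx]
      ring
    have h1 := hmin _ hfeas2
    have h2 := taylor_upper F hF (2 * u) (fun a y => (hHess a y).2) x ((-t) • ξ)
    rw [(fderiv ℝ F x).map_smul] at h2
    have h3 : ‖(-t) • ξ‖ ^ 2 = t ^ 2 * ‖ξ‖ ^ 2 := by
      rw [norm_smul, mul_pow, Real.norm_eq_abs, abs_neg, sq_abs]
    rw [h3] at h2
    simp only [smul_eq_mul, hfder, hgx, hI] at h2
    have ht2 : -t * ‖ξ‖ ^ 2 + 2 * u / 2 * (t ^ 2 * ‖ξ‖ ^ 2) = -(1 / (4 * u)) * ‖ξ‖ ^ 2 := by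
      rw [ht]; field_simp; ring
    rw [hI]
    nlinarith [h1, h2]
  · -- upper bound: strong convexity toward xstar
    set dd : EuclideanSpace ℝ (Fin n) := xstar - x with hdd
    have h2 := taylor_lower F hF (2 * v) (fun a y => (hHess a y).1) x dd
    have hxdd : x + dd = xstar := by rw [hdd]; abel
    rw [hxdd, hfder] at h2
    have hgdd : @inner ℝ _ _ g dd = @inner ℝ _ _ ξ dd := by
      rw [hinner, hinner]
      have h1 : ∑ i, g i * dd i - ∑ i, ξ i * dd i = ∑ i, (s / n) * dd i := by
        rw [← Finset.sum_sub_distrib]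
        apply Finset.sum_congr rfl
        intro i _
        rw [hξ i]
        ring
      have h4 : ∑ i, dd i = 0 := by
        simp only [hdd, PiLp.sub_apply]
        rw [Finset.sum_sub_distrib, hfeas, hx, sub_self]
      rw [← Finset.mul_sum, h4, mul_zero] at h1
      linarith
    rw [hgdd] at h2
    have hCS : -(‖ξ‖ * ‖dd‖) ≤ @inner ℝ _ _ ξ dd := by
      have := real_inner_le_norm (-ξ) dd
      rw [inner_neg_left, norm_neg] at this
      linarith
    have key : ‖ξ‖ * ‖dd‖ ≤ v * ‖dd‖ ^ 2 + 1 / (4 * v) * ‖ξ‖ ^ 2 := by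
      rw [← sub_nonneg]
      have h5 : v * ‖dd‖ ^ 2 + 1 / (4 * v) * ‖ξ‖ ^ 2 - ‖ξ‖ * ‖dd‖
          = (2 * v * ‖dd‖ - ‖ξ‖) ^ 2 / (4 * v) := by
        field_simp
        ring
      rw [h5]
      positivity
    rw [hI]
    linarith [h2, hCS, key]
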